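/- Let D ∈ {−1,0,1}^{|ℰ|×m} be the incidence matrix of a connected graph, d ≥ 1, D̃ = D ⊗ I_{d²}, and let Q ∈ ℝ^{N×md²}, η ∈ ℝ^N, a* ∈ ℝ^{md²}, and x̃ = Q a* + η. Let Π̃ denote the orthogonal projector onto the null space of D̃, and let D† be the Moore–Penrose pseudoinverse of D. Fix λ > 0 and suppose ‖Π̃ Qᵀ η‖₂ ≤ mλ/2 and ‖((D†)ᵀ ⊗ I_{d²}) Qᵀ η‖_∞ ≤ mλ/2. Let â be any minimizer over a ∈ ℝ^{md²} of (1/2m)‖x̃ − Qa‖₂² + λ‖D̃a‖₁. Then for every S ⊆ [|ℰ|d²]: (1/m)‖Q(â − a*)‖₂² ≤ λ‖â − a*‖₂ + 3λ‖(D̃(â − a*))_S‖₁ + 4λ‖(D̃a*)_{S^c}‖₁ − λ‖(D̃(â − a*))_{S^c}‖₁; in particular, â − a* lies in the cone C_S = {h : ‖(D̃h)_{S^c}‖₁ ≤ ‖h‖₂ + 3‖(D̃h)_S‖₁ + 4‖(D̃a*)_{S^c}‖₁}. -/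

import Mathlib

open Matrix Finset
open scoped Kronecker

/-- `D` is the incidence matrix of (an orientation of) an undirected graph:
each row has exactly one `+1` entry and one `-1` entry, and is `0` elsewhere. -/
def IsIncidenceMatrix {E m : ℕ} (D : Matrix (Fin E) (Fin m) ℝ) : Prop :=
  ∀ j : Fin E, ∃ a b : Fin m, a ≠ b ∧ D j a = 1 ∧ D j b = -1 ∧
    ∀ i : Fin m, i ≠ a → i ≠ b → D j i = 0

/-- The undirected simple graph underlying an incidence matrix. -/
def incidenceGraph {E m : ℕ} (D : Matrix (Fin E) (Fin m) ℝ) : SimpleGraph (Fin m) :=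
  SimpleGraph.fromRel (fun a b => ∃ j : Fin E, D j a = 1 ∧ D j b = -1)

/-- `B` is the Moore–Penrose pseudoinverse of `A` (the four Penrose conditions). -/
def IsMoorePenrose {α β : Type*} [Fintype α] [Fintype β]
    (A : Matrix α β ℝ) (B : Matrix β α ℝ) : Prop :=
  A * B * A = A ∧ B * A * B = B ∧ (A * B)ᵀ = A * B ∧ (B * A)ᵀ = B * A

private lemma matrix_ext_mulVec {α β : Type*} [Fintype α] [Fintype β] [DecidableEq β]
    (A B : Matrix α β ℝ) (h : ∀ v, A *ᵥ v = B *ᵥ v) : A = B := by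
  ext i j
  have := congrFun (h (Pi.single j 1)) i
  simpa using this

/-- Basic inequality and cone membership for the TV-penalized
least squares estimator.  If `x̃ = Q a* + η`, `Π̃` is the orthogonal projector onto
the null space of `D̃ = D ⊗ I_{d²}`, the noise conditions
`‖Π̃ Qᵀ η‖₂ ≤ mλ/2` and `‖((D†)ᵀ ⊗ I_{d²}) Qᵀ η‖_∞ ≤ mλ/2` hold, and `â` minimizes
`(1/2m)‖x̃ − Qa‖₂² + λ‖D̃a‖₁`, then for every `S` the basic inequality holds and
`â − a*` lies in the cone `C_S`. -/
theorem tv_basic_inequality_and_cone {E m d N : ℕ}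
    (D : Matrix (Fin E) (Fin m) ℝ) (hD : IsIncidenceMatrix D)
    (hconn : (incidenceGraph D).Connected)
    (Dt : Matrix (Fin E × Fin (d ^ 2)) (Fin m × Fin (d ^ 2)) ℝ)
    (hDt : Dt = D ⊗ₖ (1 : Matrix (Fin (d ^ 2)) (Fin (d ^ 2)) ℝ))
    (Ddag : Matrix (Fin m) (Fin E) ℝ) (hMP : IsMoorePenrose D Ddag)
    (Pit : Matrix (Fin m × Fin (d ^ 2)) (Fin m × Fin (d ^ 2)) ℝ)
    (hPsym : Pitᵀ = Pit) (hPidem : Pit * Pit = Pit)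
    (hPnull : ∀ v : Fin m × Fin (d ^ 2) → ℝ, Dt *ᵥ (Pit *ᵥ v) = 0)
    (hPfix : ∀ v : Fin m × Fin (d ^ 2) → ℝ, Dt *ᵥ v = 0 → Pit *ᵥ v = v)
    (Q : Matrix (Fin N) (Fin m × Fin (d ^ 2)) ℝ)
    (η : Fin N → ℝ) (astar : Fin m × Fin (d ^ 2) → ℝ)
    (xt : Fin N → ℝ) (hxt : xt = Q *ᵥ astar + η)
    (lam : ℝ) (hlam : 0 < lam)
    (hnoise1 : Real.sqrt (∑ p, ((Pit *ᵥ (Qᵀ *ᵥ η)) p) ^ 2) ≤ (m : ℝ) * lam / 2)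
    (hnoise2 : ∀ p : Fin E × Fin (d ^ 2),
      |(((Ddagᵀ ⊗ₖ (1 : Matrix (Fin (d ^ 2)) (Fin (d ^ 2)) ℝ)) *ᵥ (Qᵀ *ᵥ η)) p)|
        ≤ (m : ℝ) * lam / 2)
    (ahat : Fin m × Fin (d ^ 2) → ℝ)
    (hmin : ∀ a : Fin m × Fin (d ^ 2) → ℝ,
      (1 / (2 * (m : ℝ))) * ∑ i, (xt i - (Q *ᵥ ahat) i) ^ 2
          + lam * ∑ p, |(Dt *ᵥ ahat) p|
        ≤ (1 / (2 * (m : ℝ))) * ∑ i, (xt i - (Q *ᵥ a) i) ^ 2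
          + lam * ∑ p, |(Dt *ᵥ a) p|) :
    ∀ S : Finset (Fin E × Fin (d ^ 2)),
      ((1 / (m : ℝ)) * ∑ i, ((Q *ᵥ (ahat - astar)) i) ^ 2
          ≤ lam * Real.sqrt (∑ q, (ahat q - astar q) ^ 2)
            + 3 * lam * ∑ p ∈ S, |(Dt *ᵥ (ahat - astar)) p|
            + 4 * lam * ∑ p ∈ Sᶜ, |(Dt *ᵥ astar) p|
            - lam * ∑ p ∈ Sᶜ, |(Dt *ᵥ (ahat - astar)) p|) ∧
      (∑ p ∈ Sᶜ, |(Dt *ᵥ (ahat - astar)) p|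
          ≤ Real.sqrt (∑ q, (ahat q - astar q) ^ 2)
            + 3 * ∑ p ∈ S, |(Dt *ᵥ (ahat - astar)) p|
            + 4 * ∑ p ∈ Sᶜ, |(Dt *ᵥ astar) p|) := by
  intro S
  -- m is positive since the graph is connected (hence nonempty)
  have hmpos : (0 : ℝ) < m := by
    have : Nonempty (Fin m) := hconn.nonempty
    exact_mod_cast Fin.pos_iff_nonempty.mpr this
  have hmne : (m : ℝ) ≠ 0 := ne_of_gt hmpos
  -- abbreviations
  set K : Matrix (Fin m × Fin (d ^ 2)) (Fin m × Fin (d ^ 2)) ℝ :=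
    (Ddag * D) ⊗ₖ (1 : Matrix (Fin (d ^ 2)) (Fin (d ^ 2)) ℝ) with hK
  have hKfact : K = (Ddag ⊗ₖ (1 : Matrix (Fin (d ^ 2)) (Fin (d ^ 2)) ℝ)) * Dt := by
    rw [hK, hDt, ← Matrix.mul_kronecker_mul, Matrix.one_mul]
  -- D̃ * K = D̃
  have hDtK : Dt * K = Dt := by
    rw [hK, hDt, ← Matrix.mul_kronecker_mul, Matrix.one_mul, ← Matrix.mul_assoc, hMP.1]
  -- D̃ * Π̃ = 0
  have hDtPit : Dt * Pit = 0 := by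
    apply matrix_ext_mulVec
    intro v
    rw [← Matrix.mulVec_mulVec]
    simp [hPnull v]
  -- K * Π̃ = 0
  have hKPit : K * Pit = 0 := by
    rw [hKfact, Matrix.mul_assoc, hDtPit, Matrix.mul_zero]
  -- K is symmetric
  have hKsym : Kᵀ = K := by
    rw [hK, ← Matrix.kroneckerMap_transpose, Matrix.transpose_one, hMP.2.2.2]
  -- Π̃ = 1 - K
  have hPitEq : Pit = 1 - K := by
    have e1 : Pit * (1 - K) = 1 - K := by
      apply matrix_ext_mulVec
      intro v
      rw [← Matrix.mulVec_mulVec]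
      apply hPfix
      rw [Matrix.mulVec_mulVec, Matrix.mul_sub, Matrix.mul_one, hDtK, sub_self,
        Matrix.zero_mulVec]
    have e2 : (1 - K) * Pit = Pit := by
      rw [Matrix.sub_mul, Matrix.one_mul, hKPit, sub_zero]
    have e3 := congrArg Matrix.transpose e1
    rw [Matrix.transpose_mul, Matrix.transpose_sub, Matrix.transpose_one, hKsym, hPsym] at e3
    exact e2.symm.trans e3
  -- decomposition of any vector
  have hsplit : ∀ v : Fin m × Fin (d ^ 2) → ℝ, v = Pit *ᵥ v + K *ᵥ v := by
    intro v
    rw [hPitEq, Matrix.sub_mulVec, Matrix.one_mulVec, sub_add_cancel]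
  -- notation for the main quantities
  set h : Fin m × Fin (d ^ 2) → ℝ := ahat - astar with hhdef
  set u : Fin m × Fin (d ^ 2) → ℝ := Qᵀ *ᵥ η with hu
  set R : ℝ := Real.sqrt (∑ q, (ahat q - astar q) ^ 2) with hR
  set sS : ℝ := ∑ p ∈ S, |(Dt *ᵥ h) p| with hsS
  set sC : ℝ := ∑ p ∈ Sᶜ, |(Dt *ᵥ h) p| with hsC
  set aC : ℝ := ∑ p ∈ Sᶜ, |(Dt *ᵥ astar) p| with haC
  set A : ℝ := ∑ i, ((Q *ᵥ h) i) ^ 2 with hA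
  set Bhat : ℝ := ∑ p, |(Dt *ᵥ ahat) p| with hBhat
  set Bstar : ℝ := ∑ p, |(Dt *ᵥ astar) p| with hBstar
  set L1 : ℝ := ∑ p, |(Dt *ᵥ h) p| with hL1
  set T : ℝ := ∑ i, η i * (Q *ᵥ h) i with hT
  -- Step 1: basic inequality A - 2T ≤ 2 m lam (Bstar - Bhat)
  have hwi : ∀ i, xt i - (Q *ᵥ ahat) i = η i - (Q *ᵥ h) i := by
    intro i
    rw [hxt, hhdef, Matrix.mulVec_sub]
    simp only [Pi.add_apply, Pi.sub_apply]
    ring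
  have hsi : ∀ i, xt i - (Q *ᵥ astar) i = η i := by
    intro i; rw [hxt]; simp
  have step1 : A - 2 * T ≤ 2 * ((m : ℝ) * lam) * (Bstar - Bhat) := by
    have hb := hmin astar
    have e1 : ∑ i, (xt i - (Q *ᵥ ahat) i) ^ 2
        = ∑ i, (η i) ^ 2 - 2 * T + A := by
      rw [hT, hA, Finset.mul_sum, ← Finset.sum_sub_distrib, ← Finset.sum_add_distrib]
      apply Finset.sum_congr rfl
      intro i _
      rw [hwi i]; ring
    have e2 : ∑ i, (xt i - (Q *ᵥ astar) i) ^ 2 = ∑ i, (η i) ^ 2 := by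
      apply Finset.sum_congr rfl
      intro i _; rw [hsi i]
    rw [e1, e2] at hb
    have h2m : (0 : ℝ) < 2 * m := by positivity
    have hb2 : (1 / (2 * (m : ℝ))) * (A - 2 * T) ≤ lam * (Bstar - Bhat) := by
      nlinarith [hb]
    have hb3 := mul_le_mul_of_nonneg_left hb2 (le_of_lt h2m)
    have e3 : (2 * (m : ℝ)) * ((1 / (2 * (m : ℝ))) * (A - 2 * T)) = A - 2 * T := by
      field_simp
    have e4 : (2 * (m : ℝ)) * (lam * (Bstar - Bhat)) = 2 * ((m : ℝ) * lam) * (Bstar - Bhat) := by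
      ring
    linarith [hb3, e3.symm.le, e4.le]
  -- Step 2: decompose T
  have hTdec : T = (Pit *ᵥ u) ⬝ᵥ h
      + ((Ddagᵀ ⊗ₖ (1 : Matrix (Fin (d ^ 2)) (Fin (d ^ 2)) ℝ)) *ᵥ u) ⬝ᵥ (Dt *ᵥ h) := by
    have t0 : T = u ⬝ᵥ h := by
      rw [hT, hu, Matrix.mulVec_transpose, ← Matrix.dotProduct_mulVec]
      rfl
    have t1 : u ⬝ᵥ h = u ⬝ᵥ (Pit *ᵥ h) + u ⬝ᵥ (K *ᵥ h) := by
      conv_lhs => rw [hsplit h]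
      rw [dotProduct_add]
    have t2 : u ⬝ᵥ (Pit *ᵥ h) = (Pit *ᵥ u) ⬝ᵥ h := by
      rw [Matrix.dotProduct_mulVec, ← Matrix.mulVec_transpose, hPsym]
    have t3 : u ⬝ᵥ (K *ᵥ h)
        = ((Ddagᵀ ⊗ₖ (1 : Matrix (Fin (d ^ 2)) (Fin (d ^ 2)) ℝ)) *ᵥ u) ⬝ᵥ (Dt *ᵥ h) := by
      rw [hKfact, ← Matrix.mulVec_mulVec, Matrix.dotProduct_mulVec, ← Matrix.mulVec_transpose,
        ← Matrix.kroneckerMap_transpose, Matrix.transpose_one]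
    rw [t0, t1, t2, t3]
  -- Step 3: bound the two terms
  have hb1 : (Pit *ᵥ u) ⬝ᵥ h ≤ ((m : ℝ) * lam / 2) * R := by
    have c1 : (Pit *ᵥ u) ⬝ᵥ h
        ≤ Real.sqrt (∑ q, ((Pit *ᵥ u) q) ^ 2) * Real.sqrt (∑ q, (h q) ^ 2) :=
      Real.sum_mul_le_sqrt_mul_sqrt _ _ _
    have c2 : Real.sqrt (∑ q, (h q) ^ 2) = R := by
      rw [hR]
      simp only [hhdef, Pi.sub_apply]
    rw [c2] at c1
    refine le_trans c1 ?_
    exact mul_le_mul_of_nonneg_right (by rw [hu]; exact hnoise1) (Real.sqrt_nonneg _)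
  have hb2 : ((Ddagᵀ ⊗ₖ (1 : Matrix (Fin (d ^ 2)) (Fin (d ^ 2)) ℝ)) *ᵥ u) ⬝ᵥ (Dt *ᵥ h)
      ≤ ((m : ℝ) * lam / 2) * L1 := by
    have c1 : ((Ddagᵀ ⊗ₖ (1 : Matrix (Fin (d ^ 2)) (Fin (d ^ 2)) ℝ)) *ᵥ u) ⬝ᵥ (Dt *ᵥ h)
        ≤ ∑ p, ((m : ℝ) * lam / 2) * |(Dt *ᵥ h) p| := by
      apply Finset.sum_le_sum
      intro p _
      calc ((Ddagᵀ ⊗ₖ (1 : Matrix (Fin (d ^ 2)) (Fin (d ^ 2)) ℝ)) *ᵥ u) p * (Dt *ᵥ h) p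
          ≤ |((Ddagᵀ ⊗ₖ (1 : Matrix (Fin (d ^ 2)) (Fin (d ^ 2)) ℝ)) *ᵥ u) p * (Dt *ᵥ h) p| :=
            le_abs_self _
        _ = |((Ddagᵀ ⊗ₖ (1 : Matrix (Fin (d ^ 2)) (Fin (d ^ 2)) ℝ)) *ᵥ u) p| * |(Dt *ᵥ h) p| :=
            abs_mul _ _
        _ ≤ ((m : ℝ) * lam / 2) * |(Dt *ᵥ h) p| :=
            mul_le_mul_of_nonneg_right (by rw [hu]; exact hnoise2 p) (abs_nonneg _)
    rw [← Finset.mul_sum] at c1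
    exact c1
  have hTle : T ≤ ((m : ℝ) * lam / 2) * R + ((m : ℝ) * lam / 2) * L1 := by
    rw [hTdec]; exact add_le_add hb1 hb2
  -- Step 4: penalty term bound
  have hBbound : Bstar - Bhat ≤ sS + 2 * aC - sC := by
    have t1 : ∀ p, |(Dt *ᵥ astar) p| - |(Dt *ᵥ ahat) p| ≤ |(Dt *ᵥ h) p| := by
      intro p
      have e : (Dt *ᵥ h) p = (Dt *ᵥ ahat) p - (Dt *ᵥ astar) p := by
        rw [hhdef, Matrix.mulVec_sub]; simp
      have := abs_sub_abs_le_abs_sub ((Dt *ᵥ astar) p) ((Dt *ᵥ ahat) p)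
      have e2 : |(Dt *ᵥ astar) p - (Dt *ᵥ ahat) p| = |(Dt *ᵥ h) p| := by
        rw [e, abs_sub_comm]
      linarith [e2.symm.le]
    have t2 : ∀ p, |(Dt *ᵥ astar) p| - |(Dt *ᵥ ahat) p|
        ≤ 2 * |(Dt *ᵥ astar) p| - |(Dt *ᵥ h) p| := by
      intro p
      have e : (Dt *ᵥ h) p = (Dt *ᵥ ahat) p - (Dt *ᵥ astar) p := by
        rw [hhdef, Matrix.mulVec_sub]; simp
      have := abs_sub ((Dt *ᵥ ahat) p) ((Dt *ᵥ astar) p)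
      rw [← e] at this
      linarith
    have split1 : Bstar = ∑ p ∈ S, |(Dt *ᵥ astar) p| + aC := by
      rw [hBstar, haC, Finset.sum_add_sum_compl]
    have split2 : Bhat = ∑ p ∈ S, |(Dt *ᵥ ahat) p| + ∑ p ∈ Sᶜ, |(Dt *ᵥ ahat) p| := by
      rw [hBhat, Finset.sum_add_sum_compl]
    have bS : ∑ p ∈ S, |(Dt *ᵥ astar) p| - ∑ p ∈ S, |(Dt *ᵥ ahat) p| ≤ sS := by
      rw [hsS, ← Finset.sum_sub_distrib]
      exact Finset.sum_le_sum fun p _ => t1 p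
    have bC : ∑ p ∈ Sᶜ, |(Dt *ᵥ astar) p| - ∑ p ∈ Sᶜ, |(Dt *ᵥ ahat) p| ≤ 2 * aC - sC := by
      rw [haC, hsC, Finset.mul_sum, ← Finset.sum_sub_distrib, ← Finset.sum_sub_distrib]
      exact Finset.sum_le_sum fun p _ => t2 p
    linarith [split1, split2, bS, bC]
  -- Step 5: combine
  have hL1split : L1 = sS + sC := by
    rw [hL1, hsS, hsC, Finset.sum_add_sum_compl]
  have hAle : A ≤ (m : ℝ) * (lam * R + 3 * lam * sS + 4 * lam * aC - lam * sC) := by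
    have c1 : A ≤ 2 * T + 2 * ((m : ℝ) * lam) * (Bstar - Bhat) := by linarith [step1]
    have c2 : 2 * T ≤ 2 * (((m : ℝ) * lam / 2) * R + ((m : ℝ) * lam / 2) * L1) := by
      linarith [hTle]
    have c3 : 2 * ((m : ℝ) * lam) * (Bstar - Bhat)
        ≤ 2 * ((m : ℝ) * lam) * (sS + 2 * aC - sC) :=
      mul_le_mul_of_nonneg_left hBbound (by positivity)
    calc A ≤ 2 * T + 2 * ((m : ℝ) * lam) * (Bstar - Bhat) := c1
      _ ≤ 2 * (((m : ℝ) * lam / 2) * R + ((m : ℝ) * lam / 2) * L1)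
            + 2 * ((m : ℝ) * lam) * (sS + 2 * aC - sC) := add_le_add c2 c3
      _ = (m : ℝ) * (lam * R + 3 * lam * sS + 4 * lam * aC - lam * sC) := by
          rw [hL1split]; ring
  have goal1 : (1 / (m : ℝ)) * A ≤ lam * R + 3 * lam * sS + 4 * lam * aC - lam * sC := by
    have := mul_le_mul_of_nonneg_left hAle (by positivity : (0:ℝ) ≤ 1 / (m : ℝ))
    calc (1 / (m : ℝ)) * A
        ≤ (1 / (m : ℝ)) * ((m : ℝ) * (lam * R + 3 * lam * sS + 4 * lam * aC - lam * sC)) := this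
      _ = lam * R + 3 * lam * sS + 4 * lam * aC - lam * sC := by
          rw [← mul_assoc, one_div, inv_mul_cancel₀ hmne, one_mul]
  refine ⟨goal1, ?_⟩
  -- cone membership
  have hA0 : 0 ≤ (1 / (m : ℝ)) * A := by positivity
  have g2 : lam * sC ≤ lam * (R + 3 * sS + 4 * aC) := by
    have e : lam * (R + 3 * sS + 4 * aC) = lam * R + 3 * lam * sS + 4 * lam * aC := by ring
    linarith [goal1, hA0, e.le, e.symm.le]
  have := (mul_le_mul_iff_right₀ hlam).mp g2
  linarith [this]
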